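/- Let α ∈ (1,2) and let G : ℝ² → ℂ be the inverse Fourier transform of ξ ↦ e^{−‖ξ‖^α}. Define Λ^α G as the inverse Fourier transform of the integrable function ξ ↦ ‖ξ‖^α e^{−‖ξ‖^α}. Then G is continuously differentiable and for every η ∈ ℝ², −(Λ^α G)(η) + (1/α) η · ∇G(η) + (1 − 1/α) G(η) = (1 − 3/α) G(η). In other words, G is an eigenfunction of the operator 𝓛 = −Λ^α + (1/α) η·∇ + (1 − 1/α) with eigenvalue 1 − 3/α. -/

import Mathlib

open MeasureTheory Real Filter
open scoped FourierTransform ENNReal Topology RealInnerProductSpace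

noncomputable section

local notation "E₂" => EuclideanSpace ℝ (Fin 2)

lemma bounded_aux {α s t : ℝ} (hα : 1 < α) (hs : 0 ≤ s) (ht : 0 < t) :
    ∃ C : ℝ, ∀ r : ℝ, 0 ≤ r → (1 + r) ^ (3 + s) * Real.exp (-(t * r ^ α)) ≤ C := by
  have h0 : (0:ℝ) < 3 + s := by linarith
  have hlo := rpow_mul_exp_neg_mul_rpow_isLittleO_exp_neg (3 + s) hα ht
  have hexp : Tendsto (fun x : ℝ => Real.exp (-(1/2) * x)) atTop (𝓝 0) := by
    apply Real.tendsto_exp_atBot.comp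
    exact Tendsto.const_mul_atTop_of_neg (by norm_num) tendsto_id
  have hm : Tendsto (fun x : ℝ => x ^ (3+s) * Real.exp (-t * x ^ α)) atTop (𝓝 0) :=
    hlo.trans_tendsto hexp
  have hev : ∀ᶠ r in atTop, r ^ (3+s) * Real.exp (-t * r ^ α) ≤ ((2:ℝ) ^ (3+s))⁻¹ :=
    hm.eventually_le_const (show (0:ℝ) < ((2:ℝ) ^ (3+s))⁻¹ by positivity)
  obtain ⟨R, hR⟩ := hev.exists_forall_of_atTop
  set R' := max R 1 with hR'
  have hcont : ContinuousOn (fun r : ℝ => (1 + r) ^ (3 + s) * Real.exp (-(t * r ^ α)))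
      (Set.Icc 0 R') := by
    apply ContinuousOn.mul
    · exact (continuousOn_const.add continuousOn_id).rpow_const
        (fun r hr => Or.inl (ne_of_gt (by have := hr.1; show (0:ℝ) < 1 + r; linarith)))
    · exact (((continuousOn_id.rpow_const (fun r hr => Or.inr (by linarith))).const_smul
        t).neg).rexp
  obtain ⟨C₀, hC₀⟩ := (isCompact_Icc).exists_bound_of_continuousOn hcont
  refine ⟨max C₀ 1, fun r hr => ?_⟩
  rcases le_or_gt r R' with h | h
  · exact le_max_of_le_left <| (le_abs_self _).trans <|
      (Real.norm_eq_abs _ ▸ hC₀ r ⟨hr, h⟩)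
  · have hr1 : (1:ℝ) ≤ r := le_trans (le_max_right _ _) h.le
    have key : (1 + r) ^ (3+s) ≤ (2:ℝ)^(3+s) * r ^ (3+s) := by
      rw [← Real.mul_rpow (by norm_num) (by linarith)]
      exact Real.rpow_le_rpow (by linarith) (by linarith) h0.le
    have h2 : r ^ (3+s) * Real.exp (-t * r ^ α) ≤ ((2:ℝ) ^ (3+s))⁻¹ :=
      hR r (le_trans (le_max_left _ _) h.le)
    have : (1 + r) ^ (3 + s) * Real.exp (-(t * r ^ α)) ≤
        (2:ℝ)^(3+s) * (r ^ (3+s) * Real.exp (-t * r ^ α)) := by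
      rw [neg_mul]
      calc (1 + r) ^ (3 + s) * Real.exp (-(t * r ^ α))
          ≤ ((2:ℝ)^(3+s) * r ^ (3+s)) * Real.exp (-(t * r ^ α)) := by
            exact mul_le_mul_of_nonneg_right key (Real.exp_nonneg _)
        _ = (2:ℝ)^(3+s) * (r ^ (3+s) * Real.exp (-(t * r ^ α))) := by ring
    refine le_max_of_le_right (this.trans ?_)
    calc (2:ℝ)^(3+s) * (r ^ (3+s) * Real.exp (-t * r ^ α))
        ≤ (2:ℝ)^(3+s) * ((2:ℝ)^(3+s))⁻¹ := by
          exact mul_le_mul_of_nonneg_left h2 (by positivity)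
      _ = 1 := mul_inv_cancel₀ (by positivity)

lemma integrable_aux {α : ℝ} (hα : 1 < α) {s t : ℝ} (hs : 0 ≤ s) (ht : 0 < t) :
    Integrable (fun x : E₂ => ‖x‖ ^ s * Real.exp (-(t * ‖x‖ ^ α))) := by
  obtain ⟨C, hC⟩ := bounded_aux hα hs ht
  have hα0 : (0:ℝ) ≤ α := by linarith
  have hmeas : Continuous (fun x : E₂ => ‖x‖ ^ s * Real.exp (-(t * ‖x‖ ^ α))) := by
    apply Continuous.mul
    · exact continuous_norm.rpow_const (fun x => Or.inr hs)
    · exact (((continuous_norm.rpow_const (fun x => Or.inr hα0)).const_smul t).neg).rexp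
  have hdim : ((Module.finrank ℝ E₂ : ℝ)) < 3 := by
    simp [finrank_euclideanSpace_fin]; norm_num
  refine ((integrable_one_add_norm (μ := volume) hdim).const_mul C).mono'
    hmeas.aestronglyMeasurable (Eventually.of_forall fun x => ?_)
  set r := ‖x‖ with hr
  have hr0 : 0 ≤ r := norm_nonneg _
  have h1r : (0:ℝ) < 1 + r := by linarith
  have hnn : 0 ≤ r ^ s * Real.exp (-(t * r ^ α)) := by positivity
  rw [Real.norm_eq_abs, abs_of_nonneg hnn]
  have key : r ^ s * Real.exp (-(t * r ^ α)) * (1+r) ^ (3:ℝ) ≤ C := by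
    calc r ^ s * Real.exp (-(t * r ^ α)) * (1+r) ^ (3:ℝ)
        ≤ (1+r) ^ s * Real.exp (-(t * r ^ α)) * (1+r) ^ (3:ℝ) := by
          have : r ^ s ≤ (1+r) ^ s := Real.rpow_le_rpow hr0 (by linarith) hs
          exact mul_le_mul_of_nonneg_right (mul_le_mul_of_nonneg_right this (Real.exp_nonneg _))
            (by positivity)
      _ = (1+r) ^ (3+s) * Real.exp (-(t * r ^ α)) := by
          rw [Real.rpow_add h1r]; ring
      _ ≤ C := hC r hr0
  have h3 : (0:ℝ) < (1+r) ^ (3:ℝ) := by positivity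
  have := (le_div_iff₀ h3).mpr key
  rw [Real.rpow_neg h1r.le]
  simpa [div_eq_mul_inv, mul_comm] using this

lemma integrable_smul_char (η : E₂) {g : E₂ → ℂ} (hg : Integrable g) :
    Integrable (fun ξ : E₂ => Real.fourierChar ⟪ξ, η⟫ • g ξ) := by
  have c : Continuous fun ξ : E₂ => Real.fourierChar ⟪ξ, η⟫ :=
    Real.continuous_fourierChar.comp (continuous_id.inner continuous_const)
  rw [← integrable_norm_iff (f := fun ξ : E₂ => Real.fourierChar ⟪ξ, η⟫ • g ξ)
    (c.aestronglyMeasurable.smul hg.1)]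
  simp_rw [Circle.norm_smul]
  exact hg.norm

/-- The profile `G`: the inverse Fourier transform of `ξ ↦ e^{-‖ξ‖^α}` on `ℝ²`. -/
def Gprof (α : ℝ) : EuclideanSpace ℝ (Fin 2) → ℂ :=
  𝓕⁻ (fun ξ : EuclideanSpace ℝ (Fin 2) => (Real.exp (-‖ξ‖ ^ α) : ℂ))

/-- `Λ^α G`: the inverse Fourier transform of `ξ ↦ ‖ξ‖^α e^{-‖ξ‖^α}` on `ℝ²`. -/
def LambdaG (α : ℝ) : EuclideanSpace ℝ (Fin 2) → ℂ :=
  𝓕⁻ (fun ξ : EuclideanSpace ℝ (Fin 2) => ((‖ξ‖ ^ α : ℝ) : ℂ) * (Real.exp (-‖ξ‖ ^ α) : ℂ))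

/-- Proposition 4.1(1) of the paper: `G` is a `C¹` eigenfunction of the operator
`𝓛 = -Λ^α + (1/α) η·∇ + (1 - 1/α)` with eigenvalue `1 - 3/α`. -/
theorem statement3 (α : ℝ) (hα1 : 1 < α) (hα2 : α < 2) :
    ContDiff ℝ 1 (Gprof α) ∧
    ∀ η : EuclideanSpace ℝ (Fin 2),
      -(LambdaG α η) + ((1 / α : ℝ) : ℂ) * fderiv ℝ (Gprof α) η η
          + ((1 - 1 / α : ℝ) : ℂ) * Gprof α η
        = ((1 - 3 / α : ℝ) : ℂ) * Gprof α η := by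
  have hα0 : (0:ℝ) < α := by linarith
  have hαne : α ≠ 0 := ne_of_gt hα0
  -- basic integrability
  have Ie : Integrable (fun ξ : E₂ => Real.exp (-‖ξ‖ ^ α)) := by
    have := integrable_aux hα1 (le_refl (0:ℝ)) one_pos
    simpa using this
  have Iec : Integrable (fun ξ : E₂ => (Real.exp (-‖ξ‖ ^ α) : ℂ)) := Ie.ofReal
  have I1 : Integrable (fun ξ : E₂ => ‖ξ‖ * Real.exp (-‖ξ‖ ^ α)) := by
    have := integrable_aux hα1 (zero_le_one) one_pos
    simpa using this
  have Iα : ∀ t : ℝ, 0 < t → Integrable (fun ξ : E₂ => ‖ξ‖ ^ α * Real.exp (-(t * ‖ξ‖ ^ α))) :=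
    fun t ht => integrable_aux hα1 hα0.le ht
  -- C¹ smoothness of G
  have hG : ContDiff ℝ 1 (Gprof α) := by
    have h : ∀ (n : ℕ), (n : ℕ∞) ≤ 1 →
        Integrable (fun v : E₂ => ‖v‖ ^ n * ‖(Real.exp (-‖v‖ ^ α) : ℂ)‖) := by
      intro n hn
      have hn' : n ≤ 1 := by exact_mod_cast hn
      interval_cases n
      · simpa using Iec.norm
      · simpa [Complex.norm_exp] using I1
    have hF := Real.contDiff_fourier (f := fun ξ : E₂ => (Real.exp (-‖ξ‖ ^ α) : ℂ)) h
    have : Gprof α = fun w : E₂ =>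
        𝓕 (fun ξ : E₂ => (Real.exp (-‖ξ‖ ^ α) : ℂ)) (-w) :=
      funext fun w => Real.fourierInv_eq_fourier_neg _ w
    rw [this]
    exact hF.comp contDiff_neg
  refine ⟨hG, fun η => ?_⟩
  set D := fderiv ℝ (Gprof α) η with hD
  -- the parametric family
  set F : ℝ → E₂ → ℂ := fun t ξ => Real.fourierChar ⟪ξ, η⟫ • ((Real.exp (-(t * ‖ξ‖ ^ α)) : ℝ) : ℂ)
    with hFdef
  set F' : ℝ → E₂ → ℂ := fun t ξ =>
    Real.fourierChar ⟪ξ, η⟫ • ((-(‖ξ‖ ^ α) * Real.exp (-(t * ‖ξ‖ ^ α)) : ℝ) : ℂ) with hF'def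
  have hcont : ∀ t : ℝ, Continuous (F t) := by
    intro t
    apply Continuous.smul
    · exact continuous_subtype_val.comp (Real.continuous_fourierChar.comp (continuous_id.inner continuous_const))
    · exact Complex.continuous_ofReal.comp
        (((continuous_norm.rpow_const (fun _ => Or.inr hα0.le)).const_smul t).neg.rexp)
  have hcont' : ∀ t : ℝ, Continuous (F' t) := by
    intro t
    apply Continuous.smul
    · exact continuous_subtype_val.comp (Real.continuous_fourierChar.comp (continuous_id.inner continuous_const))
    · apply Complex.continuous_ofReal.comp
      exact ((continuous_norm.rpow_const (fun _ => Or.inr hα0.le)).neg).mul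
        (((continuous_norm.rpow_const (fun _ => Or.inr hα0.le)).const_smul t).neg.rexp)
  have hFint : Integrable (F 1) := by
    apply integrable_smul_char
    simpa using Iec
  have h_bound : ∀ᵐ ξ : E₂ ∂volume, ∀ t ∈ Metric.ball (1:ℝ) (1/2),
      ‖F' t ξ‖ ≤ ‖ξ‖ ^ α * Real.exp (-(1/2 * ‖ξ‖ ^ α)) := by
    refine Eventually.of_forall fun ξ t ht => ?_
    have ht' : (1/2 : ℝ) ≤ t := by
      rw [Metric.mem_ball, Real.dist_eq, abs_sub_lt_iff] at ht
      linarith [ht.2]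
    have hξ : (0:ℝ) ≤ ‖ξ‖ ^ α := Real.rpow_nonneg (norm_nonneg _) _
    rw [hF'def]
    simp only [Circle.norm_smul, Complex.norm_real, Real.norm_eq_abs, abs_mul, abs_neg,
      abs_of_nonneg hξ, Real.abs_exp]
    apply mul_le_mul_of_nonneg_left _ hξ
    apply Real.exp_le_exp.2
    apply neg_le_neg
    exact mul_le_mul_of_nonneg_right ht' hξ
  have h_diff : ∀ᵐ ξ : E₂ ∂volume, ∀ t ∈ Metric.ball (1:ℝ) (1/2),
      HasDerivAt (fun u => F u ξ) (F' t ξ) t := by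
    refine Eventually.of_forall fun ξ t _ => ?_
    have h1 : HasDerivAt (fun u : ℝ => -(u * ‖ξ‖ ^ α)) (-(‖ξ‖ ^ α)) t :=
      (hasDerivAt_mul_const _).neg
    have h2 : HasDerivAt (fun u : ℝ => Real.exp (-(u * ‖ξ‖ ^ α)))
        (Real.exp (-(t * ‖ξ‖ ^ α)) * -(‖ξ‖ ^ α)) t := h1.exp
    have h3 := (h2.ofReal_comp).const_mul ((Real.fourierChar ⟪ξ, η⟫ : ℂ))
    simp only [hFdef, hF'def, Circle.smul_def]
    show HasDerivAt (fun u => (Real.fourierChar ⟪ξ, η⟫ : ℂ) * ((Real.exp (-(u * ‖ξ‖ ^ α)) : ℝ) : ℂ))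
      ((Real.fourierChar ⟪ξ, η⟫ : ℂ) * ((-(‖ξ‖ ^ α) * Real.exp (-(t * ‖ξ‖ ^ α)) : ℝ) : ℂ)) t
    refine h3.congr_deriv ?_
    push_cast
    ring
  have hder := hasDerivAt_integral_of_dominated_loc_of_deriv_le (F := F) (F' := F')
    (x₀ := (1:ℝ)) (s := Metric.ball (1:ℝ) (1/2)) (Metric.ball_mem_nhds _ (by norm_num))
    (Eventually.of_forall fun t => (hcont t).aestronglyMeasurable)
    hFint ((hcont' 1).aestronglyMeasurable) h_bound
    ((Iα (1/2) (by norm_num))) h_diff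
  obtain ⟨-, hΦ⟩ := hder
  -- identify the derivative with -Λ^α G
  have hD1 : (∫ ξ : E₂, F' 1 ξ) = -(LambdaG α η) := by
    have : LambdaG α η = ∫ ξ : E₂, Real.fourierChar ⟪ξ, η⟫ •
        (((‖ξ‖ ^ α : ℝ) : ℂ) * (Real.exp (-‖ξ‖ ^ α) : ℂ)) :=
      Real.fourierInv_eq _ η
    rw [this, ← integral_neg]
    apply integral_congr_ae
    refine Eventually.of_forall fun ξ => ?_
    simp only [hF'def, Circle.smul_def]
    push_cast
    simp only [smul_eq_mul]
    ring
  -- the scaling identity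
  have hEq : (fun t => ∫ ξ : E₂, F t ξ) =ᶠ[𝓝 (1:ℝ)]
      fun t => ((t ^ (-(2/α)) : ℝ) : ℂ) * Gprof α ((t ^ (-(1/α)) : ℝ) • η) := by
    filter_upwards [Ioi_mem_nhds (zero_lt_one (α := ℝ))] with t ht
    rw [Set.mem_Ioi] at ht
    set R : ℝ := t ^ (1/α) with hRdef
    have hR : (0:ℝ) < R := Real.rpow_pos_of_pos ht _
    have key := MeasureTheory.Measure.integral_comp_smul_of_nonneg (μ := volume)
      (fun ξ : E₂ => Real.fourierChar ⟪ξ, (t ^ (-(1/α)) : ℝ) • η⟫ •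
        ((Real.exp (-‖ξ‖ ^ α) : ℝ) : ℂ)) R (hR := hR.le)
    have hLHS : (∫ x : E₂, Real.fourierChar ⟪R • x, (t ^ (-(1/α)) : ℝ) • η⟫ •
          ((Real.exp (-‖R • x‖ ^ α) : ℝ) : ℂ)) = ∫ ξ : E₂, F t ξ := by
      apply integral_congr_ae
      refine Eventually.of_forall fun x => ?_
      dsimp only
      have hinner : ⟪R • x, (t ^ (-(1/α)) : ℝ) • η⟫ = ⟪x, η⟫ := by
        rw [real_inner_smul_left, real_inner_smul_right, ← mul_assoc, hRdef,
          ← Real.rpow_add ht]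
        norm_num
      have hnorm : ‖R • x‖ ^ α = t * ‖x‖ ^ α := by
        rw [norm_smul, Real.norm_eq_abs, abs_of_pos hR,
          Real.mul_rpow hR.le (norm_nonneg _), hRdef, ← Real.rpow_mul ht.le,
          one_div_mul_cancel hαne, Real.rpow_one]
      rw [hinner, hnorm, hFdef]
    have hRHS : ((R ^ Module.finrank ℝ E₂ : ℝ))⁻¹ •
        (∫ ξ : E₂, Real.fourierChar ⟪ξ, (t ^ (-(1/α)) : ℝ) • η⟫ •
          ((Real.exp (-‖ξ‖ ^ α) : ℝ) : ℂ))
        = ((t ^ (-(2/α)) : ℝ) : ℂ) * Gprof α ((t ^ (-(1/α)) : ℝ) • η) := by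
      have h1 : (∫ ξ : E₂, Real.fourierChar ⟪ξ, (t ^ (-(1/α)) : ℝ) • η⟫ •
          ((Real.exp (-‖ξ‖ ^ α) : ℝ) : ℂ)) = Gprof α ((t ^ (-(1/α)) : ℝ) • η) :=
        (Real.fourierInv_eq _ _).symm
      have h2 : ((R ^ Module.finrank ℝ E₂ : ℝ))⁻¹ = t ^ (-(2/α)) := by
        rw [finrank_euclideanSpace_fin, hRdef, ← Real.rpow_natCast (t ^ (1/α)) 2,
          ← Real.rpow_mul ht.le, ← Real.rpow_neg ht.le]
        congr 1
        push_cast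
        ring
      rw [h1, h2, Complex.real_smul]
    rw [hLHS] at key
    rw [key]
    exact hRHS
  -- differentiate the right-hand side
  have hGdiff : Differentiable ℝ (Gprof α) := hG.differentiable one_ne_zero
  have ha : HasDerivAt (fun t : ℝ => t ^ (-(2/α))) (-(2/α)) 1 := by
    have := Real.hasDerivAt_rpow_const (x := (1:ℝ)) (p := -(2/α)) (Or.inl one_ne_zero)
    simpa using this
  have hc : HasDerivAt (fun t : ℝ => t ^ (-(1/α))) (-(1/α)) 1 := by
    have := Real.hasDerivAt_rpow_const (x := (1:ℝ)) (p := -(1/α)) (Or.inl one_ne_zero)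
    simpa using this
  have hγ : HasDerivAt (fun t : ℝ => (t ^ (-(1/α)) : ℝ) • η) ((-(1/α) : ℝ) • η) 1 :=
    hc.smul_const η
  have hpt : ((1:ℝ) ^ (-(1/α)) : ℝ) • η = η := by
    rw [Real.one_rpow, one_smul]
  have hGd : HasFDerivAt (Gprof α) D (((1:ℝ) ^ (-(1/α)) : ℝ) • η) := by
    rw [hpt]
    exact (hGdiff η).hasFDerivAt
  have hcomp : HasDerivAt (fun t : ℝ => Gprof α ((t ^ (-(1/α)) : ℝ) • η))
      (D ((-(1/α) : ℝ) • η)) 1 := hGd.comp_hasDerivAt 1 hγ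
  have hmul := (ha.ofReal_comp).mul hcomp
  have hΦ2 := hmul.congr_of_eventuallyEq hEq
  have huniq := hΦ.unique hΦ2
  rw [hD1] at huniq
  simp only [Real.one_rpow, one_smul, Complex.ofReal_one, one_mul,
    ContinuousLinearMap.map_smul, Complex.real_smul] at huniq
  rw [huniq]
  push_cast
  field_simp
  ring
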